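/- For every integer β, the series Σ_{γ∈ℤ} D_3(γ) e^{h(β−γ)} converges absolutely and equals 0; i.e., the discrete convolution of D_3 with the discrete function β ↦ e^{hβ} is identically zero. -/

import Mathlib

/-- The polynomial `P_4(λ) = (1-e^{2h})(1-λ)⁴
  - 2(λ(e^{2h}+1) - e^h(λ²+1)) (h(1-λ)² + (h³/6)(λ²+4λ+1))`. -/
noncomputable def P4 (h x : ℝ) : ℝ :=
  (1 - Real.exp (2 * h)) * (1 - x) ^ 4 -
    2 * (x * (Real.exp (2 * h) + 1) - Real.exp h * (x ^ 2 + 1)) *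
      (h * (1 - x) ^ 2 + h ^ 3 / 6 * (x ^ 2 + 4 * x + 1))

private lemma cubic_zero {a0 a1 a2 a3 r1 r2 r3 r4 : ℝ}
    (h12 : r1 ≠ r2) (h13 : r1 ≠ r3) (h14 : r1 ≠ r4)
    (h23 : r2 ≠ r3) (h24 : r2 ≠ r4) (h34 : r3 ≠ r4)
    (e1 : a3*r1^3 + a2*r1^2 + a1*r1 + a0 = 0)
    (e2 : a3*r2^3 + a2*r2^2 + a1*r2 + a0 = 0)
    (e3 : a3*r3^3 + a2*r3^2 + a1*r3 + a0 = 0)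
    (e4 : a3*r4^3 + a2*r4^2 + a1*r4 + a0 = 0) :
    a3 = 0 ∧ a2 = 0 ∧ a1 = 0 ∧ a0 = 0 := by
  have f12 : a3*(r1^2+r1*r2+r2^2) + a2*(r1+r2) + a1 = 0 := by
    apply mul_left_cancel₀ (sub_ne_zero.mpr h12)
    rw [mul_zero]; linear_combination e1 - e2
  have f13 : a3*(r1^2+r1*r3+r3^2) + a2*(r1+r3) + a1 = 0 := by
    apply mul_left_cancel₀ (sub_ne_zero.mpr h13)
    rw [mul_zero]; linear_combination e1 - e3
  have f14 : a3*(r1^2+r1*r4+r4^2) + a2*(r1+r4) + a1 = 0 := by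
    apply mul_left_cancel₀ (sub_ne_zero.mpr h14)
    rw [mul_zero]; linear_combination e1 - e4
  have g3 : a3*(r1+r2+r3) + a2 = 0 := by
    apply mul_left_cancel₀ (sub_ne_zero.mpr h23)
    rw [mul_zero]; linear_combination f12 - f13
  have g4 : a3*(r1+r2+r4) + a2 = 0 := by
    apply mul_left_cancel₀ (sub_ne_zero.mpr h24)
    rw [mul_zero]; linear_combination f12 - f14
  have ha3 : a3 = 0 := by
    apply mul_left_cancel₀ (sub_ne_zero.mpr h34)
    rw [mul_zero]; linear_combination g3 - g4
  have ha2 : a2 = 0 := by linear_combination g3 - (r1+r2+r3) * ha3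
  have ha1 : a1 = 0 := by
    linear_combination f12 - (r1^2+r1*r2+r2^2)*ha3 - (r1+r2)*ha2
  have ha0 : a0 = 0 := by
    linear_combination e1 - r1^3*ha3 - r1^2*ha2 - r1*ha1
  exact ⟨ha3, ha2, ha1, ha0⟩

set_option maxHeartbeats 2000000 in
/-- For every integer `β`, the series `∑_{γ ∈ ℤ} D_3(γ) e^{h(β-γ)}` converges and
equals `0`: the discrete convolution of `D_3` with `β ↦ e^{hβ}` is identically zero. -/
theorem D3_conv_exp (h p p3 lam1 lam2 A1 A2 C : ℝ) (D3 : ℤ → ℝ)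
    (hh : 0 < h)
    (hp : p = (1 - Real.exp (2 * h)) + 2 * Real.exp h * (h + h ^ 3 / 6))
    (hp3 : p3 = iteratedDeriv 3 (P4 h) 0 / 6)
    (hpne : p ≠ 0)
    (hne : lam1 ≠ lam2)
    (hroot1 : P4 h lam1 = 0) (hroot2 : P4 h lam2 = 0)
    (hlam1_0 : 0 < |lam1|) (hlam1_1 : |lam1| < Real.exp (-h))
    (hlam2_0 : 0 < |lam2|) (hlam2_1 : |lam2| < Real.exp (-h))
    (hder1 : deriv (P4 h) lam1 ≠ 0) (hder2 : deriv (P4 h) lam2 ≠ 0)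
    (hinv1 : P4 h (1 / lam1) = 0) (hinv2 : P4 h (1 / lam2) = 0)
    (hA1 : A1 = 2 * (1 - lam1) ^ 4 *
        (lam1 * (Real.exp (2 * h) + 1) - Real.exp h * (lam1 ^ 2 + 1)) * p
        / (lam1 * deriv (P4 h) lam1))
    (hA2 : A2 = 2 * (1 - lam2) ^ 4 *
        (lam2 * (Real.exp (2 * h) + 1) - Real.exp h * (lam2 ^ 2 + 1)) * p
        / (lam2 * deriv (P4 h) lam2))
    (hC : C = 1 + 4 * Real.exp h + Real.exp (2 * h) + Real.exp h * p3 / p)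
    (hD : ∀ β : ℤ, D3 β =
      if β = 0 then (2 * C + A1 / lam1 + A2 / lam2) / p
      else if β.natAbs = 1 then (-2 * Real.exp h + A1 + A2) / p
      else (A1 * lam1 ^ (β.natAbs - 1) + A2 * lam2 ^ (β.natAbs - 1)) / p)
    (β : ℤ) :
    HasSum (fun γ : ℤ => D3 γ * Real.exp (h * ((β : ℝ) - (γ : ℝ)))) 0 := by
  have hEpos : (0:ℝ) < Real.exp h := Real.exp_pos h
  set E := Real.exp h with hEdef
  have hEne : E ≠ 0 := ne_of_gt hEpos
  have hE2 : Real.exp (2*h) = E^2 := by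
    rw [two_mul, Real.exp_add, hEdef]; ring
  have hE1 : 1 < E := by
    rw [hEdef, ← Real.exp_zero]; exact Real.exp_lt_exp.mpr hh
  have hEneg : Real.exp (-h) = E⁻¹ := by
    rw [Real.exp_neg, hEdef]
  have hEinv1 : E⁻¹ < 1 := by
    rw [inv_lt_one_iff₀]; right; exact hE1
  -- basic facts about the roots
  have hl1ne : lam1 ≠ 0 := abs_pos.mp hlam1_0
  have hl2ne : lam2 ≠ 0 := abs_pos.mp hlam2_0
  have habs1 : |lam1| < 1 := lt_trans (hEneg ▸ hlam1_1) hEinv1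
  have habs2 : |lam2| < 1 := lt_trans (hEneg ▸ hlam2_1) hEinv1
  have hb1 := abs_lt.mp habs1
  have hb2 := abs_lt.mp habs2
  have hsq1 : lam1^2 < 1 := by nlinarith [hb1.1, hb1.2]
  have hsq2 : lam2^2 < 1 := by nlinarith [hb2.1, hb2.2]
  have hlam1E : |lam1 * E| < 1 := by
    rw [abs_mul, abs_of_pos hEpos]
    calc |lam1| * E < E⁻¹ * E := by
          exact mul_lt_mul_of_pos_right (hEneg ▸ hlam1_1) hEpos
      _ = 1 := inv_mul_cancel₀ hEne
  have hlam2E : |lam2 * E| < 1 := by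
    rw [abs_mul, abs_of_pos hEpos]
    calc |lam2| * E < E⁻¹ * E := by
          exact mul_lt_mul_of_pos_right (hEneg ▸ hlam2_1) hEpos
      _ = 1 := inv_mul_cancel₀ hEne
  have hlam1dE : |lam1 / E| < 1 := by
    rw [abs_div, abs_of_pos hEpos, div_lt_one hEpos]
    exact lt_trans habs1 hE1
  have hlam2dE : |lam2 / E| < 1 := by
    rw [abs_div, abs_of_pos hEpos, div_lt_one hEpos]
    exact lt_trans habs2 hE1
  have h1l1E : 1 - lam1*E ≠ 0 := by
    have := (abs_lt.mp hlam1E).2; intro hc; linarith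
  have h1l2E : 1 - lam2*E ≠ 0 := by
    have := (abs_lt.mp hlam2E).2; intro hc; linarith
  have h1l1dE : 1 - lam1/E ≠ 0 := by
    have := (abs_lt.mp hlam1dE).2; intro hc; linarith
  have h1l2dE : 1 - lam2/E ≠ 0 := by
    have := (abs_lt.mp hlam2dE).2; intro hc; linarith
  -- the reciprocal roots
  set m1 := 1/lam1 with hm1def
  set m2 := 1/lam2 with hm2def
  have hm1 : lam1 * m1 = 1 := by rw [hm1def]; field_simp
  have hm2 : lam2 * m2 = 1 := by rw [hm2def]; field_simp
  -- pairwise distinctness of the four roots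
  have h13 : lam1 ≠ m1 := by
    intro hc; rw [← hc] at hm1; nlinarith [hm1, hsq1]
  have h14 : lam1 ≠ m2 := by
    intro hc; rw [← hc] at hm2
    nlinarith [sq_nonneg (lam1 - lam2), hm2, hsq1, hsq2]
  have h23 : lam2 ≠ m1 := by
    intro hc; rw [← hc] at hm1
    nlinarith [sq_nonneg (lam1 - lam2), hm1, hsq1, hsq2]
  have h24 : lam2 ≠ m2 := by
    intro hc; rw [← hc] at hm2; nlinarith [hm2, hsq2]
  have h34 : m1 ≠ m2 := by
    intro hc
    apply hne
    have h' : (1:ℝ)/m1 = 1/m2 := by rw [hc]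
    rw [hm1def, hm2def, one_div_one_div, one_div_one_div] at h'
    exact h'
  -- coefficient form of P4
  set c3 : ℝ := -4*(1 - E^2) + 2*E*(-2*h + 2/3*h^3) - 2*(E^2+1)*(h + h^3/6) with hc3def
  set c2 : ℝ := 6*(1 - E^2) + 4*E*(h + h^3/6) - 2*(E^2+1)*(-2*h + 2/3*h^3) with hc2def
  have hP4x : ∀ x : ℝ, P4 h x = p*x^4 + c3*x^3 + c2*x^2 + c3*x + p := by
    intro x
    rw [P4, hp, hE2, hc3def, hc2def, ← hEdef]
    ring
  set Qp : Polynomial ℝ := Polynomial.C p * Polynomial.X^4 + Polynomial.C c3 * Polynomial.X^3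
      + Polynomial.C c2 * Polynomial.X^2 + Polynomial.C c3 * Polynomial.X + Polynomial.C p
      with hQpdef
  have hQfun : P4 h = fun x => Qp.eval x := by
    funext x
    rw [hP4x x, hQpdef]
    simp
  have hderiv : ∀ x : ℝ, deriv (P4 h) x = c3 + 2*c2*x + 3*c3*x^2 + 4*p*x^3 := by
    intro x
    rw [hQfun, Polynomial.deriv, hQpdef]
    simp
    ring
  have hdq : ∀ q : Polynomial ℝ, deriv (fun y => Polynomial.eval y q)
      = fun y => Polynomial.eval y (Polynomial.derivative q) :=
    fun q => funext fun y => Polynomial.deriv q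
  have hiter : iteratedDeriv 3 (P4 h) 0 = 6 * c3 := by
    rw [hQfun, show (3:ℕ) = 2+1 from rfl, iteratedDeriv_succ', hdq,
      show (2:ℕ) = 1+1 from rfl, iteratedDeriv_succ', hdq,
      show (1:ℕ) = 0+1 from rfl, iteratedDeriv_succ', hdq, iteratedDeriv_zero, hQpdef]
    simp
    ring
  have hp3c : p3 = c3 := by rw [hp3, hiter]; ring
  -- root equations in coefficient form
  have R1 : p*lam1^4 + c3*lam1^3 + c2*lam1^2 + c3*lam1 + p = 0 := by
    rw [← hP4x lam1]; exact hroot1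
  have R2 : p*lam2^4 + c3*lam2^3 + c2*lam2^2 + c3*lam2 + p = 0 := by
    rw [← hP4x lam2]; exact hroot2
  have R3 : p*m1^4 + c3*m1^3 + c2*m1^2 + c3*m1 + p = 0 := by
    rw [← hP4x m1]; exact hinv1
  have R4 : p*m2^4 + c3*m2^3 + c2*m2^2 + c3*m2 + p = 0 := by
    rw [← hP4x m2]; exact hinv2
  -- Vieta via the cubic difference
  have E1 : (c3 + p*(lam1+lam2+m1+m2))*lam1^3
      + (c2 - p*(lam1*lam2 + lam1*m1 + lam1*m2 + lam2*m1 + lam2*m2 + m1*m2))*lam1^2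
      + (c3 + p*(lam1*lam2*m1 + lam1*lam2*m2 + lam1*m1*m2 + lam2*m1*m2))*lam1
      + (p - p*(lam1*lam2*m1*m2)) = 0 := by linear_combination R1
  have E2 : (c3 + p*(lam1+lam2+m1+m2))*lam2^3
      + (c2 - p*(lam1*lam2 + lam1*m1 + lam1*m2 + lam2*m1 + lam2*m2 + m1*m2))*lam2^2
      + (c3 + p*(lam1*lam2*m1 + lam1*lam2*m2 + lam1*m1*m2 + lam2*m1*m2))*lam2
      + (p - p*(lam1*lam2*m1*m2)) = 0 := by linear_combination R2
  have E3 : (c3 + p*(lam1+lam2+m1+m2))*m1^3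
      + (c2 - p*(lam1*lam2 + lam1*m1 + lam1*m2 + lam2*m1 + lam2*m2 + m1*m2))*m1^2
      + (c3 + p*(lam1*lam2*m1 + lam1*lam2*m2 + lam1*m1*m2 + lam2*m1*m2))*m1
      + (p - p*(lam1*lam2*m1*m2)) = 0 := by linear_combination R3
  have E4 : (c3 + p*(lam1+lam2+m1+m2))*m2^3
      + (c2 - p*(lam1*lam2 + lam1*m1 + lam1*m2 + lam2*m1 + lam2*m2 + m1*m2))*m2^2
      + (c3 + p*(lam1*lam2*m1 + lam1*lam2*m2 + lam1*m1*m2 + lam2*m1*m2))*m2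
      + (p - p*(lam1*lam2*m1*m2)) = 0 := by linear_combination R4
  obtain ⟨ha3, ha2, ha1, ha0⟩ := cubic_zero hne h13 h14 h23 h24 h34 E1 E2 E3 E4
  have hc3v : c3 = -(p*(lam1+lam2+m1+m2)) := by linear_combination ha3
  have hc2v : c2 = p*(lam1*lam2 + lam1*m1 + lam1*m2 + lam2*m1 + lam2*m2 + m1*m2) := by
    linear_combination ha2
  -- factored derivatives at the roots
  have hd1 : deriv (P4 h) lam1 = p*(lam1-lam2)*(lam1-m1)*(lam1-m2) := by
    rw [hderiv lam1, hc3v, hc2v]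
    linear_combination p*(lam2+m2)*hm1 + p*(lam1+m1)*hm2
  have hd2 : deriv (P4 h) lam2 = p*(lam2-lam1)*(lam2-m1)*(lam2-m2) := by
    rw [hderiv lam2, hc3v, hc2v]
    linear_combination p*(lam1+m1)*hm2 + p*(lam2+m2)*hm1
  -- evaluation of D3
  have hD0 : D3 0 = (2*C + A1/lam1 + A2/lam2)/p := by rw [hD 0]; simp
  have hD1 : D3 1 = (-2*E + A1 + A2)/p := by rw [hD 1]; norm_num
  have hDm1 : D3 (-1) = (-2*E + A1 + A2)/p := by rw [hD (-1)]; norm_num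
  have hDgen : ∀ n : ℕ, D3 ((n:ℤ)+2) = (A1*lam1^(n+1) + A2*lam2^(n+1))/p := by
    intro n
    rw [hD ((n:ℤ)+2), if_neg (by omega), if_neg (by omega)]
    have hn : ((n:ℤ)+2).natAbs - 1 = n+1 := by omega
    rw [hn]
  have hDnegGen : ∀ n : ℕ, D3 (-((n:ℤ)+2)) = (A1*lam1^(n+1) + A2*lam2^(n+1))/p := by
    intro n
    rw [hD (-((n:ℤ)+2)), if_neg (by omega), if_neg (by omega)]
    have hn : (-((n:ℤ)+2)).natAbs - 1 = n+1 := by omega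
    rw [hn]
  -- exp as zpow
  have hexpz : ∀ z : ℤ, Real.exp (h * (z:ℝ)) = E ^ z := by
    intro z
    rw [Real.exp_mul, hEdef, Real.rpow_intCast]
  -- positive-side sum
  have hpos2 : HasSum (fun n:ℕ => D3 ((n:ℤ)+2) * E ^ (-((n:ℤ)+2)))
      ((A1*lam1/(p*E^2)) * (1 - lam1/E)⁻¹ + (A2*lam2/(p*E^2)) * (1 - lam2/E)⁻¹) := by
    have hsum := ((hasSum_geometric_of_abs_lt_one hlam1dE).mul_left (A1*lam1/(p*E^2))).add
      ((hasSum_geometric_of_abs_lt_one hlam2dE).mul_left (A2*lam2/(p*E^2)))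
    have hfun : (fun n:ℕ => D3 ((n:ℤ)+2) * E ^ (-((n:ℤ)+2)))
        = (fun n:ℕ => (A1*lam1/(p*E^2)) * (lam1/E)^n + (A2*lam2/(p*E^2)) * (lam2/E)^n) := by
      funext n
      rw [hDgen n, show -((n:ℤ)+2) = -(((n+2:ℕ):ℤ)) by push_cast; ring, zpow_neg,
        zpow_natCast, div_pow, div_pow]
      field_simp
      ring
    rw [hfun]; exact hsum
  have hpos : HasSum (fun n:ℕ => D3 (n:ℤ) * E ^ (-(n:ℤ)))
      ((A1*lam1/(p*E^2)) * (1 - lam1/E)⁻¹ + (A2*lam2/(p*E^2)) * (1 - lam2/E)⁻¹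
        + (D3 0 + D3 1 * E⁻¹)) := by
    have step : HasSum (fun n:ℕ => (fun m:ℕ => D3 (m:ℤ) * E ^ (-(m:ℤ))) (n+2))
        ((A1*lam1/(p*E^2)) * (1 - lam1/E)⁻¹ + (A2*lam2/(p*E^2)) * (1 - lam2/E)⁻¹) := by
      have hfun : (fun n:ℕ => (fun m:ℕ => D3 (m:ℤ) * E ^ (-(m:ℤ))) (n+2))
          = (fun n:ℕ => D3 ((n:ℤ)+2) * E ^ (-((n:ℤ)+2))) := by
        funext n
        have hc : (((n+2:ℕ)):ℤ) = (n:ℤ)+2 := by push_cast; ring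
        simp only [hc]
      rw [hfun]; exact hpos2
    have h2 := (hasSum_nat_add_iff (f := fun m:ℕ => D3 (m:ℤ) * E ^ (-(m:ℤ))) 2).mp step
    convert h2 using 1
    · rfl
    rw [Finset.sum_range_succ, Finset.sum_range_one]
    norm_num
  -- negative-side sum
  have hneg2 : HasSum (fun n:ℕ => D3 (-((n:ℤ)+2)) * E ^ ((n:ℤ)+2))
      ((A1*lam1*E^2/p) * (1 - lam1*E)⁻¹ + (A2*lam2*E^2/p) * (1 - lam2*E)⁻¹) := by
    have hsum := ((hasSum_geometric_of_abs_lt_one hlam1E).mul_left (A1*lam1*E^2/p)).add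
      ((hasSum_geometric_of_abs_lt_one hlam2E).mul_left (A2*lam2*E^2/p))
    have hfun : (fun n:ℕ => D3 (-((n:ℤ)+2)) * E ^ ((n:ℤ)+2))
        = (fun n:ℕ => (A1*lam1*E^2/p) * (lam1*E)^n + (A2*lam2*E^2/p) * (lam2*E)^n) := by
      funext n
      rw [hDnegGen n, show ((n:ℤ)+2) = (((n+2:ℕ):ℤ)) by push_cast; ring, zpow_natCast,
        mul_pow, mul_pow]
      field_simp
      ring
    rw [hfun]; exact hsum
  have hneg : HasSum (fun n:ℕ => D3 (-((n:ℤ)+1)) * E ^ ((n:ℤ)+1))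
      ((A1*lam1*E^2/p) * (1 - lam1*E)⁻¹ + (A2*lam2*E^2/p) * (1 - lam2*E)⁻¹
        + D3 (-1) * E) := by
    have step : HasSum (fun n:ℕ => (fun m:ℕ => D3 (-((m:ℤ)+1)) * E ^ ((m:ℤ)+1)) (n+1))
        ((A1*lam1*E^2/p) * (1 - lam1*E)⁻¹ + (A2*lam2*E^2/p) * (1 - lam2*E)⁻¹) := by
      have hfun : (fun n:ℕ => (fun m:ℕ => D3 (-((m:ℤ)+1)) * E ^ ((m:ℤ)+1)) (n+1))
          = (fun n:ℕ => D3 (-((n:ℤ)+2)) * E ^ ((n:ℤ)+2)) := by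
        funext n
        have hc : (((n+1:ℕ)):ℤ) = (n:ℤ)+1 := by push_cast; ring
        simp only [hc]
        norm_num
        ring_nf
      rw [hfun]; exact hneg2
    have h2 := (hasSum_nat_add_iff (f := fun m:ℕ => D3 (-((m:ℤ)+1)) * E ^ ((m:ℤ)+1)) 1).mp step
    convert h2 using 1
    · rfl
    rw [Finset.sum_range_one]
    norm_num
  -- total sum over ℤ
  have htot : HasSum (fun γ:ℤ => D3 γ * E ^ (-γ))
      (((A1*lam1/(p*E^2)) * (1 - lam1/E)⁻¹ + (A2*lam2/(p*E^2)) * (1 - lam2/E)⁻¹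
        + (D3 0 + D3 1 * E⁻¹))
       + ((A1*lam1*E^2/p) * (1 - lam1*E)⁻¹ + (A2*lam2*E^2/p) * (1 - lam2*E)⁻¹
        + D3 (-1) * E)) := by
    apply HasSum.of_nat_of_neg_add_one
    · exact hpos
    · have hfun : (fun n:ℕ => (fun γ:ℤ => D3 γ * E ^ (-γ)) (-((n:ℤ)+1)))
          = (fun n:ℕ => D3 (-((n:ℤ)+1)) * E ^ ((n:ℤ)+1)) := by
        funext n; simp only [neg_neg]
      rw [hfun]; exact hneg
  -- the value is zero
  have hzero : (((A1*lam1/(p*E^2)) * (1 - lam1/E)⁻¹ + (A2*lam2/(p*E^2)) * (1 - lam2/E)⁻¹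
        + (D3 0 + D3 1 * E⁻¹))
       + ((A1*lam1*E^2/p) * (1 - lam1*E)⁻¹ + (A2*lam2*E^2/p) * (1 - lam2*E)⁻¹
        + D3 (-1) * E)) = 0 := by
    rw [hD0, hD1, hDm1]
    have hs12 : lam1 - lam2 ≠ 0 := sub_ne_zero.mpr hne
    have hs21 : lam2 - lam1 ≠ 0 := sub_ne_zero.mpr (Ne.symm hne)
    have hs13 : lam1 - 1/lam1 ≠ 0 := by rw [← hm1def]; exact sub_ne_zero.mpr h13
    have hs14 : lam1 - 1/lam2 ≠ 0 := by rw [← hm2def]; exact sub_ne_zero.mpr h14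
    have hs23 : lam2 - 1/lam1 ≠ 0 := by rw [← hm1def]; exact sub_ne_zero.mpr h23
    have hs24 : lam2 - 1/lam2 ≠ 0 := by rw [← hm2def]; exact sub_ne_zero.mpr h24
    have hEl1 : E - lam1 ≠ 0 := sub_ne_zero.mpr (lt_trans hb1.2 hE1).ne'
    have hEl2 : E - lam2 ≠ 0 := sub_ne_zero.mpr (lt_trans hb2.2 hE1).ne'
    have hQ1ne : lam1*(E^2+1) - E*(lam1^2+1) ≠ 0 := by
      rw [show lam1*(E^2+1) - E*(lam1^2+1) = -((E - lam1)*(1 - lam1*E)) from by ring]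
      exact neg_ne_zero.mpr (mul_ne_zero hEl1 h1l1E)
    have hQ2ne : lam2*(E^2+1) - E*(lam2^2+1) ≠ 0 := by
      rw [show lam2*(E^2+1) - E*(lam2^2+1) = -((E - lam2)*(1 - lam2*E)) from by ring]
      exact neg_ne_zero.mpr (mul_ne_zero hEl2 h1l2E)
    have hprodne : lam1*lam2 - 1 ≠ 0 := fun hc =>
      h14 (by rw [hm2def, eq_div_iff hl2ne]; linarith)
    have hW1 : A1*lam1/(p*E^2) * (1 - lam1/E)⁻¹ + A1*lam1*E^2/p * (1 - lam1*E)⁻¹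
        + A1/lam1/p + A1/E/p + A1*E/p
        = A1*(E*(lam1^2-1))/(lam1*(lam1*(E^2+1) - E*(lam1^2+1)))/p := by
      field_simp
      ring
    have hW2 : A2*lam2/(p*E^2) * (1 - lam2/E)⁻¹ + A2*lam2*E^2/p * (1 - lam2*E)⁻¹
        + A2/lam2/p + A2/E/p + A2*E/p
        = A2*(E*(lam2^2-1))/(lam2*(lam2*(E^2+1) - E*(lam2^2+1)))/p := by
      field_simp
      ring
    have hl1sq : lam1^2 - 1 ≠ 0 := ne_of_lt (by linarith)
    have hl2sq : lam2^2 - 1 ≠ 0 := ne_of_lt (by linarith)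
    have hden1ne : lam1 * (p*(lam1-lam2)*(lam1-m1)*(lam1-m2)) ≠ 0 :=
      mul_ne_zero hl1ne (mul_ne_zero (mul_ne_zero (mul_ne_zero hpne hs12)
        (sub_ne_zero.mpr h13)) (sub_ne_zero.mpr h14))
    have hden2ne : lam2 * (p*(lam2-lam1)*(lam2-m1)*(lam2-m2)) ≠ 0 :=
      mul_ne_zero hl2ne (mul_ne_zero (mul_ne_zero (mul_ne_zero hpne hs21)
        (sub_ne_zero.mpr h23)) (sub_ne_zero.mpr h24))
    have hden1'ne : p*(lam1-lam2)*(lam1^2-1)*(lam1*lam2-1) ≠ 0 :=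
      mul_ne_zero (mul_ne_zero (mul_ne_zero hpne hs12) hl1sq) hprodne
    have hden2'ne : p*(lam2-lam1)*(lam2^2-1)*(lam1*lam2-1) ≠ 0 :=
      mul_ne_zero (mul_ne_zero (mul_ne_zero hpne hs21) hl2sq) hprodne
    have hA1v : A1 = 2*(1-lam1)^4*(lam1*(E^2+1) - E*(lam1^2+1))*p*lam2
        /(p*(lam1-lam2)*(lam1^2-1)*(lam1*lam2-1)) := by
      rw [hA1, hE2, hd1, div_eq_div_iff hden1ne hden1'ne, hm1def, hm2def]
      field_simp
    have hA2v : A2 = 2*(1-lam2)^4*(lam2*(E^2+1) - E*(lam2^2+1))*p*lam1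
        /(p*(lam2-lam1)*(lam2^2-1)*(lam1*lam2-1)) := by
      rw [hA2, hE2, hd2, div_eq_div_iff hden2ne hden2'ne, hm1def, hm2def]
      field_simp
    have hAU1 : A1*(E*(lam1^2-1))/(lam1*(lam1*(E^2+1) - E*(lam1^2+1)))/p
        = 2*E*(1-lam1)^4*lam2/(lam1*(lam1-lam2)*(lam1*lam2-1))/p := by
      rw [hA1v]
      field_simp
    have hAU2 : A2*(E*(lam2^2-1))/(lam2*(lam2*(E^2+1) - E*(lam2^2+1)))/p
        = 2*E*(1-lam2)^4*lam1/(lam2*(lam2-lam1)*(lam1*lam2-1))/p := by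
      rw [hA2v]
      field_simp
    have hCval : C = 1 + 4*E + E^2 - E*(lam1+lam2+1/lam1+1/lam2) := by
      rw [hC, hE2, hp3c, hc3v, hm1def, hm2def]
      field_simp
      ring
    have hsplit : (A1*lam1/(p*E^2)) * (1 - lam1/E)⁻¹ + (A2*lam2/(p*E^2)) * (1 - lam2/E)⁻¹
          + ((2*C + A1/lam1 + A2/lam2)/p + (-2*E + A1 + A2)/p * E⁻¹)
        + ((A1*lam1*E^2/p) * (1 - lam1*E)⁻¹ + (A2*lam2*E^2/p) * (1 - lam2*E)⁻¹
          + (-2*E + A1 + A2)/p * E)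
        = (A1*lam1/(p*E^2) * (1 - lam1/E)⁻¹ + A1*lam1*E^2/p * (1 - lam1*E)⁻¹
            + A1/lam1/p + A1/E/p + A1*E/p)
          + (A2*lam2/(p*E^2) * (1 - lam2/E)⁻¹ + A2*lam2*E^2/p * (1 - lam2*E)⁻¹
            + A2/lam2/p + A2/E/p + A2*E/p)
          + (2*C/p + (-2*E)/p * E⁻¹ + (-2*E)/p * E) := by
      ring
    rw [hsplit, hW1, hW2, hAU1, hAU2, hCval]
    field_simp
    ring
  rw [hzero] at htot
  -- conclude
  have hfinal := htot.mul_left (E ^ β)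
  rw [mul_zero] at hfinal
  have hfeq : (fun γ:ℤ => D3 γ * Real.exp (h*((β:ℝ)-(γ:ℝ))))
      = fun γ:ℤ => E^β * (D3 γ * E^(-γ)) := by
    funext γ
    rw [show (β:ℝ) - (γ:ℝ) = (((β - γ:ℤ)):ℝ) by push_cast; ring, hexpz (β - γ),
      zpow_sub₀ hEne, zpow_neg]
    ring
  rw [hfeq]
  exact hfinal
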